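/- Let p be a prime, K a complete discretely valued field extension of ℚ_p with valuation ring O, ramification index e and residue field of size p^d. Let t ∈ O and let ζ ∈ O satisfy ζ^{p^d} = ζ and v(t − ζ) > 0 (valuation normalized so v(p) = 1, values in (1/e)ℤ). Then for every n ≥ 0, v(t^{p^n} − ζ^{p^n}) ≥ n + c_e, where c_e = 1/e if e ≤ log p and c_e = (−log e + 1 + log log p)/log p otherwise. -/

import Mathlib

open Finset in
lemma aux19_sum {K : Type*} [Field K] (v : K → ℝ)
    (hvadd : ∀ x y : K, x ≠ 0 → y ≠ 0 → x + y ≠ 0 → min (v x) (v y) ≤ v (x + y))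
    (c : ℝ) : ∀ (s : Finset ℕ) (f : ℕ → K), (∀ i ∈ s, f i ≠ 0 → c ≤ v (f i)) →
      (∑ i ∈ s, f i) ≠ 0 → c ≤ v (∑ i ∈ s, f i) := by
  intro s
  induction s using Finset.induction with
  | empty => intro f h hne; simp at hne
  | @insert a s ha ih =>
    intro f h hne
    rw [Finset.sum_insert ha] at hne ⊢
    by_cases h0 : f a = 0
    · rw [h0, zero_add] at hne ⊢
      exact ih f (fun i hi => h i (Finset.mem_insert_of_mem hi)) hne
    by_cases hs : ∑ i ∈ s, f i = 0
    · rw [hs, add_zero] at hne ⊢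
      exact h a (Finset.mem_insert_self a s) h0
    · exact le_trans (le_min (h a (Finset.mem_insert_self a s) h0)
        (ih f (fun i hi => h i (Finset.mem_insert_of_mem hi)) hs))
        (hvadd (f a) _ h0 hs hne)

lemma aux19_pow {K : Type*} [Field K] (v : K → ℝ) (hv1 : v 1 = 0)
    (hvmul : ∀ x y : K, x ≠ 0 → y ≠ 0 → v (x * y) = v x + v y)
    (x : K) (hx : x ≠ 0) : ∀ m : ℕ, v (x ^ m) = m * v x := by
  intro m
  induction m with
  | zero => simpa using hv1
  | succ k ih =>
    rw [pow_succ, hvmul _ _ (pow_ne_zero _ hx) hx, ih]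
    push_cast; ring

lemma aux19_key (p e : ℕ) (hp : 2 ≤ p) (he : 0 < e) (k : ℕ) :
    (if (e : ℝ) ≤ Real.log p then 1 / (e : ℝ)
      else (-Real.log e + 1 + Real.log (Real.log p)) / Real.log p)
      ≤ (p : ℝ) ^ k / e - k := by
  have hp1 : (1 : ℝ) < p := by exact_mod_cast hp
  have hlp : 0 < Real.log p := Real.log_pos hp1
  have he' : (0 : ℝ) < e := by exact_mod_cast he
  have hpk : (0 : ℝ) < (p : ℝ) ^ k := by positivity
  split_ifs with h
  · -- need 1/e ≤ p^k/e - k ; use k*e ≤ k*log p = log (p^k) ≤ p^k - 1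
    have h1 : (k : ℝ) * e ≤ (p : ℝ) ^ k - 1 := by
      calc (k : ℝ) * e ≤ (k : ℝ) * Real.log p :=
            mul_le_mul_of_nonneg_left h (Nat.cast_nonneg k)
        _ = Real.log ((p : ℝ) ^ k) := (Real.log_pow (p : ℝ) k).symm
        _ ≤ (p : ℝ) ^ k - 1 := Real.log_le_sub_one_of_pos hpk
    have h2 : (0 : ℝ) ≤ ((p : ℝ) ^ k - 1 - k * e) / e := div_nonneg (by linarith) he'.le
    have heq : ((p : ℝ) ^ k - 1 - k * e) / e = (p : ℝ) ^ k / e - k - 1 / e := by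
      field_simp
      ring
    rw [heq] at h2; linarith
  · -- tangent line trick
    have ha : (0 : ℝ) < (e : ℝ) / Real.log p := div_pos he' hlp
    have hexp : Real.exp ((k : ℝ) * Real.log p - Real.log ((e : ℝ) / Real.log p))
        = (p : ℝ) ^ k * (Real.log p / e) := by
      rw [Real.exp_sub, Real.exp_log ha, ← Real.log_pow, Real.exp_log hpk,
        div_div_eq_mul_div, mul_div_assoc]
    have htan := Real.add_one_le_exp ((k : ℝ) * Real.log p - Real.log ((e : ℝ) / Real.log p))
    rw [hexp, Real.log_div he'.ne' hlp.ne'] at htan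
    rw [div_le_iff₀ hlp]
    have hr : ((p : ℝ) ^ k / e - k) * Real.log p
        = (p : ℝ) ^ k * (Real.log p / e) - k * Real.log p := by ring
    rw [hr]; linarith

lemma aux19_nat {K : Type*} [Field K] [CharZero K] (v : K → ℝ) (hv1 : v 1 = 0)
    (hvmul : ∀ x y : K, x ≠ 0 → y ≠ 0 → v (x * y) = v x + v y)
    (p : ℕ) (hp : p.Prime) (hvp : v ((p : K)) = 1)
    (hvint : ∀ m : ℤ, ¬ ((p : ℤ) ∣ m) → m ≠ 0 → v ((m : K)) = 0)
    (m : ℕ) (hm : m ≠ 0) : v ((m : K)) = (m.factorization p : ℝ) := by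
  set a := m.factorization p with ha
  have h1 : p ^ a * (m / p ^ a) = m := Nat.ordProj_mul_ordCompl_eq_self m p
  have hpne : (p : K) ≠ 0 := Nat.cast_ne_zero.mpr hp.pos.ne'
  have hcpos : 0 < m / p ^ a := Nat.ordCompl_pos p hm
  have hcne : ((m / p ^ a : ℕ) : K) ≠ 0 := Nat.cast_ne_zero.mpr hcpos.ne'
  have hnd : ¬ p ∣ m / p ^ a := Nat.not_dvd_ordCompl hp hm
  have hz : v (((m / p ^ a : ℕ) : K)) = 0 := by
    have := hvint ((m / p ^ a : ℕ) : ℤ) (by exact_mod_cast hnd)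
      (by exact_mod_cast hcpos.ne')
    rwa [Int.cast_natCast] at this
  calc v ((m : K)) = v ((p : K) ^ a * ((m / p ^ a : ℕ) : K)) := by
        rw [← Nat.cast_pow, ← Nat.cast_mul, h1]
    _ = (a : ℝ) * v ((p : K)) + v (((m / p ^ a : ℕ) : K)) := by
        rw [hvmul _ _ (pow_ne_zero _ hpne) hcne, aux19_pow v hv1 hvmul _ hpne]
    _ = (a : ℝ) := by rw [hvp, hz]; ring

lemma aux19_choose (p : ℕ) (hp : p.Prime) (N j : ℕ) (hj : 1 ≤ j) (hjN : j ≤ p ^ N) :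
    N ≤ ((p ^ N).choose j).factorization p + j.factorization p := by
  have hpN : 1 ≤ p ^ N := Nat.one_le_pow _ _ hp.pos
  have hid : p ^ N * (p ^ N - 1).choose (j - 1) = (p ^ N).choose j * j := by
    have := Nat.add_one_mul_choose_eq (p ^ N - 1) (j - 1)
    rwa [Nat.sub_add_cancel hpN,
      Nat.sub_add_cancel hj] at this
  have hC' : (p ^ N - 1).choose (j - 1) ≠ 0 :=
    (Nat.choose_pos (by omega)).ne'
  have hC : (p ^ N).choose j ≠ 0 := (Nat.choose_pos hjN).ne'
  have hfact := congrArg (fun f => f p) (congrArg Nat.factorization hid)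
  simp only [Nat.factorization_mul (pow_ne_zero _ hp.pos.ne') hC',
    Nat.factorization_mul hC (by omega : j ≠ 0), Finsupp.add_apply,
    hp.factorization_pow, Finsupp.single_eq_same] at hfact
  omega

/-- Key quantitative estimate: in a (completely) valued field K/ℚ_p with
ramification index e and residue field of size p^d, if ζ^{p^d} = ζ and
t ≡ ζ modulo the maximal ideal, then v(t^{p^n} − ζ^{p^n}) ≥ n + c_e. -/
theorem stmt19 (p : ℕ) (hp : p.Prime) (K : Type*) [Field K] [CharZero K]
    (v : K → ℝ) (hv1 : v 1 = 0)
    (hvmul : ∀ x y : K, x ≠ 0 → y ≠ 0 → v (x * y) = v x + v y)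
    (hvadd : ∀ x y : K, x ≠ 0 → y ≠ 0 → x + y ≠ 0 → min (v x) (v y) ≤ v (x + y))
    (hvp : v ((p : K)) = 1)
    (hvint : ∀ m : ℤ, ¬ ((p : ℤ) ∣ m) → m ≠ 0 → v ((m : K)) = 0)
    (e : ℕ) (he : 0 < e)
    (hdisc : ∀ x : K, x ≠ 0 → ∃ m : ℤ, v x = (m : ℝ) / (e : ℝ))
    (dd : ℕ) (hdd : 0 < dd)
    (t ζ : K) (ht : 0 ≤ v t ∨ t = 0) (hζpow : ζ ^ p ^ dd = ζ)
    (hclose : t = ζ ∨ (t - ζ ≠ 0 ∧ 0 < v (t - ζ))) :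
    ∀ n : ℕ, t ^ p ^ n = ζ ^ p ^ n ∨
      v (t ^ p ^ n - ζ ^ p ^ n) ≥ (n : ℝ) +
        (if (e : ℝ) ≤ Real.log p then 1 / (e : ℝ)
          else (-Real.log e + 1 + Real.log (Real.log p)) / Real.log p) := by
  intro n
  by_cases hEq : t ^ p ^ n = ζ ^ p ^ n
  · exact Or.inl hEq
  right
  rcases hclose with h | ⟨hb0, hbv⟩
  · exact absurd (by rw [h]) hEq
  set c : ℝ := if (e : ℝ) ≤ Real.log p then 1 / (e : ℝ)
    else (-Real.log e + 1 + Real.log (Real.log p)) / Real.log p with hc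
  set b : K := t - ζ with hbdef
  set N : ℕ := p ^ n with hN
  have hNpos : 1 ≤ N := Nat.one_le_pow _ _ hp.pos
  have he' : (0 : ℝ) < e := by exact_mod_cast he
  -- v b ≥ 1/e
  have hvb : 1 / (e : ℝ) ≤ v b := by
    obtain ⟨m, hm⟩ := hdisc b hb0
    rw [hm] at hbv ⊢
    have hm1 : (1 : ℝ) ≤ (m : ℝ) := by
      have : (0 : ℝ) < m := by
        by_contra hcon
        push_neg at hcon
        have : (m : ℝ) / e ≤ 0 := div_nonpos_of_nonpos_of_nonneg hcon he'.le
        linarith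
      have : 0 < m := by exact_mod_cast this
      exact_mod_cast this
    gcongr
  rw [ge_iff_le]
  by_cases hζ0 : ζ = 0
  · -- t^N - 0 = b^N
    have hb : b = t := by rw [hbdef, hζ0, sub_zero]
    have hzz : ζ ^ N = 0 := by rw [hζ0]; exact zero_pow (by omega)
    rw [hzz, sub_zero, ← hb, aux19_pow v hv1 hvmul b hb0 N]
    have h1 : (N : ℝ) * (1 / e) ≤ (N : ℝ) * v b :=
      mul_le_mul_of_nonneg_left hvb (Nat.cast_nonneg N)
    have h2 := aux19_key p e hp.two_le he n
    rw [← hc] at h2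
    have h3 : (N : ℝ) * (1 / e) = (p : ℝ) ^ n / e := by
      rw [hN]; push_cast; ring
    linarith
  · -- v ζ = 0
    have hζ1 : ζ ^ (p ^ dd - 1) = 1 := by
      have h1 : 1 ≤ p ^ dd := Nat.one_le_pow _ _ hp.pos
      have : ζ ^ (p ^ dd - 1) * ζ = 1 * ζ := by
        rw [one_mul, ← pow_succ, Nat.sub_add_cancel h1, hζpow]
      exact mul_right_cancel₀ hζ0 this
    have hvζ : v ζ = 0 := by
      have := aux19_pow v hv1 hvmul ζ hζ0 (p ^ dd - 1)
      rw [hζ1, hv1] at this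
      have hpd : 1 ≤ p ^ dd - 1 := by
        have : 2 ≤ p ^ dd := by
          calc 2 ≤ p := hp.two_le
            _ = p ^ 1 := (pow_one p).symm
            _ ≤ p ^ dd := Nat.pow_le_pow_right hp.pos hdd
        omega
      have hne : ((p ^ dd - 1 : ℕ) : ℝ) ≠ 0 := by
        exact_mod_cast Nat.one_le_iff_ne_zero.mp hpd
      rcases mul_eq_zero.mp this.symm with h | h
      · exact absurd h hne
      · exact h
    -- binomial expansion
    have hexp : t ^ N - ζ ^ N =
        ∑ i ∈ Finset.range N, b ^ (i + 1) * ζ ^ (N - (i + 1)) * (N.choose (i + 1) : K) := by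
      have ht' : t = b + ζ := by rw [hbdef]; ring
      conv_lhs => rw [ht']
      rw [add_pow, Finset.sum_range_succ']
      simp
    have hne : (∑ i ∈ Finset.range N,
        b ^ (i + 1) * ζ ^ (N - (i + 1)) * (N.choose (i + 1) : K)) ≠ 0 := by
      rw [← hexp]; exact sub_ne_zero.mpr hEq
    refine le_trans (aux19_sum v hvadd _ _ _ ?_ hne) (le_of_eq (congrArg v hexp.symm))
    intro i hi _
    have hiN : i < N := Finset.mem_range.mp hi
    set j : ℕ := i + 1 with hj
    have hj1 : 1 ≤ j := by omega
    have hjN : j ≤ N := by omega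
    have hCpos : 0 < N.choose j := Nat.choose_pos hjN
    have hCne : ((N.choose j : ℕ) : K) ≠ 0 := Nat.cast_ne_zero.mpr hCpos.ne'
    have hbj : b ^ j ≠ 0 := pow_ne_zero _ hb0
    have hζj : ζ ^ (N - j) ≠ 0 := pow_ne_zero _ hζ0
    have hval : v (b ^ j * ζ ^ (N - j) * (N.choose j : K))
        = (j : ℝ) * v b + ((N.choose j).factorization p : ℝ) := by
      rw [hvmul _ _ (mul_ne_zero hbj hζj) hCne, hvmul _ _ hbj hζj,
        aux19_pow v hv1 hvmul b hb0, aux19_pow v hv1 hvmul ζ hζ0, hvζ,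
        aux19_nat v hv1 hvmul p hp hvp hvint _ hCpos.ne']
      ring
    rw [hval]
    -- now the arithmetic
    set k : ℕ := j.factorization p with hk
    have hCf : (n : ℝ) - (k : ℝ) ≤ ((N.choose j).factorization p : ℝ) := by
      have := aux19_choose p hp n j hj1 (by rw [← hN]; exact hjN)
      rw [← hN, ← hk] at this
      have : (n : ℝ) ≤ ((N.choose j).factorization p : ℝ) + (k : ℝ) := by exact_mod_cast this
      linarith
    have hjk : (p : ℝ) ^ k ≤ (j : ℝ) := by
      have := Nat.ordProj_le p (show j ≠ 0 by omega)
      exact_mod_cast this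
    have hkey := aux19_key p e hp.two_le he k
    rw [← hc] at hkey
    have hjvb : (j : ℝ) * (1 / e) ≤ (j : ℝ) * v b :=
      mul_le_mul_of_nonneg_left hvb (Nat.cast_nonneg j)
    have hje : (p : ℝ) ^ k / e ≤ (j : ℝ) * (1 / e) := by
      rw [mul_one_div]
      gcongr
    linarith
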